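/- Let B be a symmetric positive definite real n×n matrix. Then the minimum eigenvalue of B satisfies λ_min(B) ≥ det(B) · ((n−1)/tr(B))^(n−1). -/

import Mathlib

open Finset

lemma amgm_prod_le {ι : Type*} (s : Finset ι) (hs : s.Nonempty) (z : ι → ℝ)
    (hz : ∀ i ∈ s, 0 ≤ z i) :
    ∏ i ∈ s, z i ≤ ((∑ i ∈ s, z i) / s.card) ^ s.card := by
  have hcard : (0:ℝ) < s.card := by exact_mod_cast hs.card_pos
  have h := Real.geom_mean_le_arith_mean s (fun _ => 1) z (fun _ _ => zero_le_one)
    (by simpa using hcard) hz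
  simp only [Real.rpow_one, one_mul, Finset.sum_const, nsmul_eq_mul, mul_one] at h
  have hprod : 0 ≤ ∏ i ∈ s, z i := Finset.prod_nonneg hz
  have key := Real.rpow_le_rpow (Real.rpow_nonneg hprod _) h (le_of_lt hcard)
  rwa [← Real.rpow_mul hprod, inv_mul_cancel₀ hcard.ne', Real.rpow_one,
    Real.rpow_natCast] at key

lemma trace_eq_sum_eigs {n : ℕ} (B : Matrix (Fin n) (Fin n) ℝ) (hB : B.IsHermitian) :
    B.trace = ∑ i, hB.eigenvalues i := by
  simpa using hB.trace_eq_sum_eigenvalues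

theorem min_eigenvalue_lower_bound (n : ℕ) (hn : 2 ≤ n)
    (B : Matrix (Fin n) (Fin n) ℝ) (hB : B.IsHermitian) (hPD : B.PosDef) :
    B.det * (((n : ℝ) - 1) / B.trace) ^ (n - 1) ≤ ⨅ i, hB.eigenvalues i := by
  have hn0 : 0 < n := by omega
  haveI : Nonempty (Fin n) := ⟨⟨0, hn0⟩⟩
  set μ := hB.eigenvalues with hμ
  have hpos : ∀ i, 0 < μ i := fun i => hPD.eigenvalues_pos i
  obtain ⟨j, hj⟩ : ∃ j, μ j = ⨅ i, μ i := exists_eq_ciInf_of_finite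
  rw [← hj]
  have htr : B.trace = ∑ i, μ i := trace_eq_sum_eigs B hB
  have htrpos : (0:ℝ) < B.trace := by
    rw [htr]; exact Finset.sum_pos (fun i _ => hpos i) Finset.univ_nonempty
  have hdet : B.det = ∏ i, μ i := by
    simpa using hB.det_eq_prod_eigenvalues
  set s := Finset.univ.erase j with hs
  have hsne : s.Nonempty := by
    haveI : Nontrivial (Fin n) := Fin.nontrivial_iff_two_le.mpr hn
    obtain ⟨k, hk⟩ : ∃ k : Fin n, k ≠ j := exists_ne j
    exact ⟨k, Finset.mem_erase.mpr ⟨hk, Finset.mem_univ k⟩⟩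
  have hscard : s.card = n - 1 := by
    rw [hs, Finset.card_erase_of_mem (Finset.mem_univ j), Finset.card_univ, Fintype.card_fin]
  have hm1 : (1:ℕ) ≤ n - 1 := by omega
  have hcastcard : ((s.card : ℝ)) = (n : ℝ) - 1 := by
    rw [hscard]; push_cast [Nat.cast_sub (by omega : 1 ≤ n)]; ring
  have hn1pos : (0:ℝ) < (n:ℝ) - 1 := by
    have : (2:ℝ) ≤ n := by exact_mod_cast hn
    linarith
  -- AM-GM on the eigenvalues other than j
  have hamgm : ∏ i ∈ s, μ i ≤ ((∑ i ∈ s, μ i) / ((n:ℝ) - 1)) ^ (n - 1) := by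
    have := amgm_prod_le s hsne μ (fun i _ => (hpos i).le)
    rwa [hcastcard, hscard] at this
  have hsum_le : ∑ i ∈ s, μ i ≤ B.trace := by
    rw [htr, hs]
    have := Finset.add_sum_erase Finset.univ μ (Finset.mem_univ j)
    nlinarith [(hpos j).le]
  have hstep : ∏ i ∈ s, μ i ≤ (B.trace / ((n:ℝ) - 1)) ^ (n - 1) := by
    refine hamgm.trans (pow_le_pow_left₀ ?_ ?_ _)
    · exact div_nonneg (Finset.sum_nonneg fun i _ => (hpos i).le) hn1pos.le
    · gcongr
  have hprod_split : ∏ i, μ i = μ j * ∏ i ∈ s, μ i :=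
    (Finset.mul_prod_erase Finset.univ μ (Finset.mem_univ j)).symm
  have hcpos : (0:ℝ) < (((n:ℝ) - 1) / B.trace) ^ (n - 1) :=
    pow_pos (div_pos hn1pos htrpos) _
  calc B.det * (((n : ℝ) - 1) / B.trace) ^ (n - 1)
      = μ j * ((∏ i ∈ s, μ i) * (((n:ℝ) - 1) / B.trace) ^ (n - 1)) := by
        rw [hdet, hprod_split]; ring
    _ ≤ μ j * ((B.trace / ((n:ℝ) - 1)) ^ (n - 1) * (((n:ℝ) - 1) / B.trace) ^ (n - 1)) := by
        refine mul_le_mul_of_nonneg_left ?_ (hpos j).le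
        exact mul_le_mul_of_nonneg_right hstep hcpos.le
    _ = μ j := by
        rw [← mul_pow, div_mul_div_comm, mul_comm B.trace, div_self
          (by positivity : ((n:ℝ) - 1) * B.trace ≠ 0), one_pow, mul_one]
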